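/- For x of order 4 in G = A(n,θ), the quotient G/[x,G] is isomorphic to a central product of the cyclic group ⟨x⟩ of order 4 with an extraspecial 2-group E of order 2^n, amalgamating ⟨x²⟩ with Z(E). -/

import Mathlib

noncomputable section

abbrev Fq (n : ℕ) : Type := GaloisField 2 n

instance (n : ℕ) : Fintype (Fq n) := Fintype.ofFinite _

@[ext] structure SuzukiA (n : ℕ) (θ : Fq n ≃+* Fq n) where
  a : Fq n
  b : Fq n

namespace SuzukiA

variable {n : ℕ} {θ : Fq n ≃+* Fq n}

instance : Mul (SuzukiA n θ) := ⟨fun x y => ⟨x.a + y.a, x.b + y.b + x.a * θ y.a⟩⟩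
instance : One (SuzukiA n θ) := ⟨⟨0, 0⟩⟩
instance : Inv (SuzukiA n θ) := ⟨fun x => ⟨x.a, x.b + x.a * θ x.a⟩⟩

theorem mul_def (x y : SuzukiA n θ) :
    x * y = ⟨x.a + y.a, x.b + y.b + x.a * θ y.a⟩ := rfl

@[simp] theorem one_a : (1 : SuzukiA n θ).a = 0 := rfl
@[simp] theorem one_b : (1 : SuzukiA n θ).b = 0 := rfl

instance : Group (SuzukiA n θ) where
  mul_assoc x y z := by ext <;> simp [mul_def, map_add] <;> ring
  one_mul x := by ext <;> simp [mul_def]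
  mul_one x := by ext <;> simp [mul_def]
  inv_mul_cancel x := by
    have h2 : (2 : Fq n) = 0 := by
      have := CharP.cast_eq_zero (Fq n) 2
      exact_mod_cast this
    show (⟨x.a, x.b + x.a * θ x.a⟩ * x : SuzukiA n θ) = 1
    ext
    · show x.a + x.a = 0
      linear_combination x.a * h2
    · show x.b + x.a * θ x.a + x.b + x.a * θ x.a = 0
      linear_combination (x.b + x.a * θ x.a) * h2

instance : Fintype (SuzukiA n θ) :=
  Fintype.ofEquiv (Fq n × Fq n)
    { toFun := fun p => ⟨p.1, p.2⟩
      invFun := fun x => (x.a, x.b)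
      left_inv := fun _ => rfl
      right_inv := fun _ => rfl }

end SuzukiA

namespace Stmt14Aux

open SuzukiA

variable {n : ℕ}

lemma h2 : (2 : Fq n) = 0 := by
  have := CharP.cast_eq_zero (Fq n) 2
  exact_mod_cast this

lemma char2 (t : Fq n) : t + t = 0 := by linear_combination t * (h2 (n := n))

lemma pow_card (hn : n ≠ 0) (c : Fq n) : c ^ (2 ^ n) = c := by
  have h : Fintype.card (Fq n) = 2 ^ n := by
    rw [← Nat.card_eq_fintype_card, GaloisField.card 2 n hn]
  rw [← h]
  exact FiniteField.pow_card c

variable {θ : Fq n ≃+* Fq n}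

lemma fix_pow {σ : Fq n ≃+* Fq n} {c : Fq n} (hc : σ c = c) (j : ℕ) : (σ ^ j) c = c := by
  induction j with
  | zero => rfl
  | succ j ih =>
    rw [pow_succ]
    show (σ ^ j) (σ c) = c
    rw [hc, ih]

lemma fix_zpow {σ : Fq n ≃+* Fq n} {c : Fq n} (hc : σ c = c) (k : ℤ) : (σ ^ k) c = c := by
  rcases k with j | j
  · simpa using fix_pow hc j
  · have hinv : (σ⁻¹) c = c := by
      have := congrArg σ.symm hc
      simpa using this.symm
    have h1 := fix_pow (σ := σ⁻¹) hinv (j + 1)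
    rw [Int.negSucc_eq, zpow_neg, ← inv_zpow,
      show ((j : ℤ) + 1) = ((j + 1 : ℕ) : ℤ) by push_cast; ring, zpow_natCast]
    exact h1

lemma fixed_eq (hθ : ∀ τ : Fq n ≃+* Fq n, τ ∈ Subgroup.zpowers θ) {c : Fq n}
    (hc : θ c = c) : c = 0 ∨ c = 1 := by
  obtain ⟨k, hk⟩ := Subgroup.mem_zpowers_iff.mp (hθ (frobeniusEquiv (Fq n) 2))
  have hfix : frobeniusEquiv (Fq n) 2 c = c := by rw [← hk]; exact fix_zpow hc k
  rw [frobeniusEquiv_def] at hfix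
  have h0 : c * (c - 1) = 0 := by linear_combination hfix
  rcases mul_eq_zero.mp h0 with h | h
  · exact Or.inl h
  · exact Or.inr (by linear_combination h)

lemma no_AS {m : ℕ} (hm : n = 2 * m + 1)
    (hθ : ∀ τ : Fq n ≃+* Fq n, τ ∈ Subgroup.zpowers θ) {c : Fq n}
    (hc : θ c = c + 1) : False := by
  have hn : n ≠ 0 := by omega
  have hd : θ (c ^ 2 + c) = c ^ 2 + c := by
    rw [map_add, map_pow, hc]
    linear_combination (c + 1) * (h2 (n := n))
  rcases fixed_eq hθ hd with h | h
  · have h0 : c * (c - 1) = 0 := by linear_combination h - c * (h2 (n := n))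
    have hfix : θ c = c := by
      rcases mul_eq_zero.mp h0 with h' | h'
      · rw [h']; exact map_zero θ
      · have : c = 1 := by linear_combination h'
        rw [this]; exact map_one θ
    rw [hfix] at hc
    exact one_ne_zero (by linear_combination -hc : (1 : Fq n) = 0)
  · have hsq : c ^ 2 = c + 1 := by linear_combination h - c * (h2 (n := n))
    have key : ∀ j : ℕ, c ^ (2 ^ (2 * j)) = c ∧ c ^ (2 ^ (2 * j + 1)) = c + 1 := by
      intro j
      induction j with
      | zero => simpa using hsq
      | succ j ih =>
        have e1 : c ^ (2 ^ (2 * (j + 1))) = (c ^ (2 ^ (2 * j + 1))) ^ 2 := by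
          rw [← pow_mul]; ring_nf
        have e2 : c ^ (2 ^ (2 * (j + 1) + 1)) = (c ^ (2 ^ (2 * (j + 1)))) ^ 2 := by
          rw [← pow_mul]; ring_nf
        have h1 : c ^ (2 ^ (2 * (j + 1))) = c := by
          rw [e1, ih.2]
          linear_combination hsq + (c + 1) * (h2 (n := n))
        exact ⟨h1, by rw [e2, h1, hsq]⟩
    have hfin := (key m).2
    rw [← hm, pow_card hn] at hfin
    exact one_ne_zero (by linear_combination -hfin : (1 : Fq n) = 0)

def Tr (n : ℕ) (c : Fq n) : Fq n := ∑ j ∈ Finset.range n, c ^ (2 ^ j)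

lemma Tr_add (c d : Fq n) : Tr n (c + d) = Tr n c + Tr n d := by
  unfold Tr
  rw [← Finset.sum_add_distrib]
  exact Finset.sum_congr rfl fun j _ => add_pow_char_pow ..

lemma Tr_zero : Tr n (0 : Fq n) = 0 := by
  unfold Tr
  exact Finset.sum_eq_zero fun j _ => zero_pow (Nat.two_pow_pos j).ne'

lemma Tr_sq (hn : n ≠ 0) (c : Fq n) : (Tr n c) ^ 2 = Tr n c := by
  unfold Tr
  have frob : ∀ s t : Fq n, (s + t) ^ 2 = s ^ 2 + t ^ 2 := fun s t => add_pow_char ..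
  have h1 : (∑ j ∈ Finset.range n, c ^ 2 ^ j) ^ 2 = ∑ j ∈ Finset.range n, (c ^ 2 ^ j) ^ 2 := by
    classical
    exact map_sum (frobenius (Fq n) 2) _ _
  rw [h1]
  have h2 : ∀ j, (c ^ 2 ^ j) ^ 2 = c ^ 2 ^ (j + 1) := by
    intro j; rw [← pow_mul, pow_succ]
  rw [Finset.sum_congr rfl fun j _ => h2 j]
  have h3 : ∑ j ∈ Finset.range n, c ^ 2 ^ (j + 1)
      = (∑ j ∈ Finset.range (n + 1), c ^ 2 ^ j) - c ^ 2 ^ 0 := by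
    rw [Finset.sum_range_succ']; ring
  rw [h3, Finset.sum_range_succ, pow_card hn]
  simp

lemma Tr_cases (hn : n ≠ 0) (c : Fq n) : Tr n c = 0 ∨ Tr n c = 1 := by
  have h := Tr_sq hn c
  have h0 : Tr n c * (Tr n c - 1) = 0 := by linear_combination h
  rcases mul_eq_zero.mp h0 with h | h
  · exact Or.inl h
  · exact Or.inr (by linear_combination h)

lemma Tr_one {m : ℕ} (hm : n = 2 * m + 1) : Tr n (1 : Fq n) = 1 := by
  unfold Tr
  simp only [one_pow, Finset.sum_const, Finset.card_range, nsmul_eq_mul, mul_one]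
  have hmod : n ≡ 1 [MOD 2] := by
    rw [Nat.ModEq]; omega
  calc ((n : ℕ) : Fq n) = ((1 : ℕ) : Fq n) := (CharP.natCast_eq_natCast (Fq n) 2).mpr hmod
    _ = 1 := Nat.cast_one

lemma Tr_equiv (hn : n ≠ 0) (σ : Fq n ≃+* Fq n) (c : Fq n) : Tr n (σ c) = Tr n c := by
  have h1 : Tr n (σ c) = σ (Tr n c) := by
    unfold Tr
    rw [map_sum]
    exact Finset.sum_congr rfl fun j _ => (map_pow σ c _).symm
  rw [h1]
  rcases Tr_cases hn c with h | h <;> rw [h] <;> simp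

lemma Tr_mul_theta (hn : n ≠ 0) (c d : Fq n) : Tr n (c * θ d) = Tr n (θ.symm c * d) := by
  have : θ (θ.symm c * d) = c * θ d := by rw [map_mul, RingEquiv.apply_symm_apply]
  rw [← this, Tr_equiv hn]

def TrHom (n : ℕ) : Fq n →+ Fq n := AddMonoidHom.mk' (Tr n) Tr_add

def Lmap (θ : Fq n ≃+* Fq n) : Fq n →+ Fq n :=
  AddMonoidHom.mk' (fun s => θ s + s) (by
    intro s t
    show θ (s + t) + (s + t) = (θ s + s) + (θ t + t)
    rw [map_add]; ring)

lemma Lmap_apply (s : Fq n) : Lmap θ s = θ s + s := rfl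

lemma TrHom_apply (c : Fq n) : TrHom n c = Tr n c := rfl

lemma card_Fq (hn : n ≠ 0) : Nat.card (Fq n) = 2 ^ n := GaloisField.card 2 n hn

lemma kerL_eq (hθ : ∀ τ : Fq n ≃+* Fq n, τ ∈ Subgroup.zpowers θ) :
    ((Lmap θ).ker : Set (Fq n)) = {0, 1} := by
  ext s
  simp only [SetLike.mem_coe, AddMonoidHom.mem_ker, Lmap_apply, Set.mem_insert_iff,
    Set.mem_singleton_iff]
  constructor
  · intro h
    have hfix : θ s = s := by linear_combination h - char2 s
    exact fixed_eq hθ hfix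
  · rintro (rfl | rfl)
    · simp
    · rw [map_one]; exact char2 1

lemma rangeTr_eq {m : ℕ} (hm : n = 2 * m + 1) :
    ((TrHom n).range : Set (Fq n)) = {0, 1} := by
  have hn : n ≠ 0 := by omega
  ext c
  simp only [SetLike.mem_coe, AddMonoidHom.mem_range, TrHom_apply, Set.mem_insert_iff,
    Set.mem_singleton_iff]
  constructor
  · rintro ⟨d, rfl⟩; exact Tr_cases hn d
  · rintro (rfl | rfl)
    · exact ⟨0, Tr_zero⟩
    · exact ⟨1, Tr_one hm⟩

lemma card_set_pair {s : Set (Fq n)} (h : s = {0, 1}) : Nat.card s = 2 := by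
  rw [h, Nat.card_coe_set_eq, Set.ncard_pair (zero_ne_one)]

lemma card_kerTr {m : ℕ} (hm : n = 2 * m + 1) : Nat.card (TrHom n).ker = 2 ^ (n - 1) := by
  have hn : n ≠ 0 := by omega
  have h1 : Nat.card (Fq n) = Nat.card (Fq n ⧸ (TrHom n).ker) * Nat.card (TrHom n).ker :=
    AddSubgroup.card_eq_card_quotient_mul_card_addSubgroup _
  have h2 : Nat.card (Fq n ⧸ (TrHom n).ker) = 2 := by
    rw [Nat.card_congr (QuotientAddGroup.quotientKerEquivRange (TrHom n)).toEquiv]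
    exact card_set_pair (rangeTr_eq hm)
  rw [card_Fq hn, h2] at h1
  have hpow : 2 ^ n = 2 * 2 ^ (n - 1) := by
    rw [← pow_succ']
    congr 1
    omega
  omega

lemma card_rangeL (hθ : ∀ τ : Fq n ≃+* Fq n, τ ∈ Subgroup.zpowers θ)
    {m : ℕ} (hm : n = 2 * m + 1) : Nat.card (Lmap θ).range = 2 ^ (n - 1) := by
  have hn : n ≠ 0 := by omega
  have h1 : Nat.card (Fq n) = Nat.card (Fq n ⧸ (Lmap θ).ker) * Nat.card (Lmap θ).ker :=
    AddSubgroup.card_eq_card_quotient_mul_card_addSubgroup _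
  have h2 : Nat.card (Lmap θ).ker = 2 := card_set_pair (kerL_eq hθ)
  have h3 : Nat.card (Fq n ⧸ (Lmap θ).ker) = Nat.card (Lmap θ).range :=
    Nat.card_congr (QuotientAddGroup.quotientKerEquivRange (Lmap θ)).toEquiv
  rw [card_Fq hn, h2, h3] at h1
  have hpow : 2 ^ n = 2 * 2 ^ (n - 1) := by
    rw [← pow_succ']
    congr 1
    omega
  omega

lemma rangeL_eq_kerTr (hθ : ∀ τ : Fq n ≃+* Fq n, τ ∈ Subgroup.zpowers θ)
    {m : ℕ} (hm : n = 2 * m + 1) : (Lmap θ).range = (TrHom n).ker := by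
  have hn : n ≠ 0 := by omega
  have hle : (Lmap θ).range ≤ (TrHom n).ker := by
    rintro _ ⟨s, rfl⟩
    rw [AddMonoidHom.mem_ker, TrHom_apply, Lmap_apply, Tr_add, Tr_equiv hn, char2]
  exact AddSubgroup.eq_of_le_of_card_ge hle
    (le_of_eq ((card_kerTr hm).trans (card_rangeL hθ hm).symm))

lemma Tr_eq_zero_iff (hθ : ∀ τ : Fq n ≃+* Fq n, τ ∈ Subgroup.zpowers θ)
    {m : ℕ} (hm : n = 2 * m + 1) (c : Fq n) : Tr n c = 0 ↔ ∃ s, θ s + s = c := by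
  constructor
  · intro h
    have : c ∈ (TrHom n).ker := by rw [AddMonoidHom.mem_ker]; exact h
    rw [← rangeL_eq_kerTr hθ hm] at this
    obtain ⟨s, hs⟩ := this
    exact ⟨s, hs⟩
  · rintro ⟨s, rfl⟩
    have hn : n ≠ 0 := by omega
    rw [Tr_add, Tr_equiv hn, char2]

lemma exists_not_fixed (hn1 : 1 < n) (hθ : ∀ τ : Fq n ≃+* Fq n, τ ∈ Subgroup.zpowers θ) :
    ∃ t : Fq n, θ t ≠ t := by
  by_contra h
  push_neg at h
  have hinj : Function.Injective (fun t : Fq n => (t = 1 : Prop)) := by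
    intro t t' htt'
    simp only [eq_iff_iff] at htt'
    rcases fixed_eq hθ (h t) with rfl | rfl <;> rcases fixed_eq hθ (h t') with rfl | rfl
    · rfl
    · exact absurd (htt'.mpr rfl) (zero_ne_one (α := Fq n))
    · exact absurd (htt'.mp rfl) (by exact fun hh => zero_ne_one (α := Fq n) hh)
    · rfl
  have hcard := Fintype.card_le_of_injective _ hinj
  rw [Fintype.card_prop, ← Nat.card_eq_fintype_card, card_Fq (by omega)] at hcard
  have h4 : 2 ^ 2 ≤ 2 ^ n := Nat.pow_le_pow_right (by norm_num) hn1
  omega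

lemma nondeg {m : ℕ} (hm : n = 2 * m + 1)
    (hθ : ∀ τ : Fq n ≃+* Fq n, τ ∈ Subgroup.zpowers θ) {u : Fq n}
    (hu0 : u ≠ 0) (hut : Tr n u = 0) :
    ∃ v, Tr n v = 0 ∧ Tr n (u * θ v + v * θ u) = 1 := by
  have hn : n ≠ 0 := by omega
  set w := θ u + θ.symm u with hw
  have key : ∀ v, Tr n (u * θ v + v * θ u) = Tr n (v * w) := by
    intro v
    rw [Tr_add, Tr_mul_theta hn]
    have h1 : v * w = θ.symm u * v + v * θ u := by rw [hw]; ring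
    rw [h1, Tr_add]
  have hw0 : w ≠ 0 := by
    intro h0
    have heq : θ u = θ.symm u := by
      rw [hw] at h0
      linear_combination h0 - char2 (θ.symm u)
    have hθθ : θ (θ u) = u := by rw [heq, RingEquiv.apply_symm_apply]
    have hs : θ (u + θ u) = u + θ u := by rw [map_add, hθθ]; ring
    rcases fixed_eq hθ hs with h | h
    · have : θ u = u := by linear_combination h - char2 u
      rcases fixed_eq hθ this with rfl | rfl
      · exact hu0 rfl
      · rw [Tr_one hm] at hut; exact one_ne_zero hut
    · have : θ u = u + 1 := by linear_combination h - char2 u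
      exact no_AS hm hθ this
  have hw1 : w ≠ 1 := by
    intro h1
    have h2' : θ (θ u) + u = 1 := by
      have := congrArg θ h1
      rw [map_add, RingEquiv.apply_symm_apply, map_one] at this
      exact this
    have hs : θ (u + θ u) = (u + θ u) + 1 := by
      rw [map_add]
      linear_combination h2' - char2 u
    exact no_AS hm hθ hs
  have h1w : (1 : Fq n) + w ≠ 0 := by
    intro h0
    exact hw1 (by linear_combination h0 - char2 (1 : Fq n))
  have hv0 : Tr n (w⁻¹ * w) = 1 := by rw [inv_mul_cancel₀ hw0]; exact Tr_one hm
  have hv2 : Tr n ((1 + w)⁻¹) + Tr n ((1 + w)⁻¹ * w) = 1 := by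
    rw [← Tr_add]
    have : (1 + w)⁻¹ + (1 + w)⁻¹ * w = (1 + w)⁻¹ * (1 + w) := by ring
    rw [this, inv_mul_cancel₀ h1w]
    exact Tr_one hm
  rcases Tr_cases hn w⁻¹ with p0 | p0
  · exact ⟨w⁻¹, p0, by rw [key]; exact hv0⟩
  · rcases Tr_cases hn ((1 + w)⁻¹) with p2 | p2
    · refine ⟨(1 + w)⁻¹, p2, ?_⟩
      rw [key]
      rw [p2] at hv2
      linear_combination hv2
    · refine ⟨w⁻¹ + (1 + w)⁻¹, ?_, ?_⟩
      · rw [Tr_add, p0, p2]; exact char2 (1 : Fq n)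
      · rw [key]
        have hexp : (w⁻¹ + (1 + w)⁻¹) * w = w⁻¹ * w + (1 + w)⁻¹ * w := by ring
        rw [hexp, Tr_add, hv0]
        rw [p2] at hv2
        exact hv2


lemma h2' : (2 : Fq n) = 0 := by
  have := CharP.cast_eq_zero (Fq n) 2
  exact_mod_cast this

theorem inv_def (x : SuzukiA n θ) : x⁻¹ = ⟨x.a, x.b + x.a * θ x.a⟩ := rfl

theorem sq_eq (g : SuzukiA n θ) : g * g = ⟨0, g.a * θ g.a⟩ := by
  ext
  · show g.a + g.a = 0
    linear_combination g.a * (h2' (n := n))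
  · show g.b + g.b + g.a * θ g.a = g.a * θ g.a
    linear_combination g.b * (h2' (n := n))

theorem comm_eq (g h : SuzukiA n θ) :
    g⁻¹ * h⁻¹ * g * h = ⟨0, g.a * θ h.a + h.a * θ g.a⟩ := by
  ext
  · simp only [mul_def, inv_def, map_add]
    linear_combination (norm := ring_nf) (g.a + h.a) * (h2' (n := n))
  · simp only [mul_def, inv_def, map_add]
    linear_combination (norm := ring_nf) (g.b + h.b + g.a * θ g.a + h.a * θ h.a + g.a * θ h.a) * (h2' (n := n))

theorem comm2_eq (g h : SuzukiA n θ) :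
    (g * h)⁻¹ * (h * g) = ⟨0, g.a * θ h.a + h.a * θ g.a⟩ := by
  ext
  · simp only [mul_def, inv_def, map_add]
    linear_combination (norm := ring_nf) (g.a + h.a) * (h2' (n := n))
  · simp only [mul_def, inv_def, map_add]
    linear_combination (norm := ring_nf) (g.b + h.b + g.a * θ g.a + h.a * θ h.a + g.a * θ h.a + h.a * θ g.a) * (h2' (n := n))

theorem commElt_eq (g h : SuzukiA n θ) :
    g * h * g⁻¹ * h⁻¹ = ⟨0, g.a * θ h.a + h.a * θ g.a⟩ := by
  ext
  · simp only [mul_def, inv_def, map_add]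
    linear_combination (norm := ring_nf) (g.a + h.a) * (h2' (n := n))
  · simp only [mul_def, inv_def, map_add]
    linear_combination (norm := ring_nf) (g.b + h.b + g.a * θ g.a + h.a * θ h.a + g.a * θ h.a) * (h2' (n := n))

theorem inv_mul_a0 {g h : SuzukiA n θ} (hg : g.a = 0) :
    g⁻¹ * h = ⟨g.a + h.a, g.b + h.b⟩ := by
  ext
  · rfl
  · show g.b + g.a * θ g.a + h.b + g.a * θ h.a = g.b + h.b
    rw [hg]
    ring

end Stmt14Aux

/-- An extraspecial `2`-group: the center has order `2`, coincides with the
commutator subgroup, and the central quotient is elementary abelian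
(equivalently, all squares are central). -/
def IsExtraspecial2 (E : Type*) [Group E] : Prop :=
  Nat.card (Subgroup.center E) = 2 ∧ commutator E = Subgroup.center E ∧
    ∀ g : E, g ^ 2 ∈ Subgroup.center E

open scoped commutatorElement

open SuzukiA in
theorem stmt14 (n m : ℕ) (hm : n = 2 * m + 1) (hn : 1 < n) (θ : Fq n ≃+* Fq n)
    (hθ : ∀ σ : Fq n ≃+* Fq n, σ ∈ Subgroup.zpowers θ)
    (x : SuzukiA n θ) (hx : orderOf x = 4) :
    ∀ (N : Subgroup (SuzukiA n θ)) [N.Normal],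
      (N : Set (SuzukiA n θ)) = {z : SuzukiA n θ | ∃ g, z = x⁻¹ * g⁻¹ * x * g} →
      ∃ P Q : Subgroup (SuzukiA n θ ⧸ N),
        P = Subgroup.zpowers (QuotientGroup.mk x : SuzukiA n θ ⧸ N) ∧
        Nat.card P = 4 ∧
        IsExtraspecial2 Q ∧
        Nat.card Q = 2 ^ n ∧
        P ⊔ Q = ⊤ ∧
        (∀ p ∈ P, ∀ q ∈ Q, Commute p q) ∧
        P ⊓ Q = Subgroup.zpowers ((QuotientGroup.mk x : SuzukiA n θ ⧸ N) ^ 2) ∧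
        (P ⊓ Q).subgroupOf Q = Subgroup.center Q := by
  intro N hNorm hN
  classical
  have hn0 : n ≠ 0 := by omega
  have hx4 : x ^ 4 = 1 := by rw [← hx]; exact pow_orderOf_eq_one x
  have hxx : x * x = ⟨0, x.a * θ x.a⟩ := Stmt14Aux.sq_eq x
  have ha : x.a ≠ 0 := by
    intro h0
    have h1 : x * x = 1 := by
      rw [hxx, h0]
      ext
      · rfl
      · show (0 : Fq n) * θ 0 = 0
        rw [zero_mul]
    have h2 : x ^ 2 = 1 := by rw [pow_two]; exact h1
    have hdvd := orderOf_dvd_of_pow_eq_one h2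
    rw [hx] at hdvd
    exact absurd hdvd (by decide)
  have hθa : θ x.a ≠ 0 := by
    intro h0
    apply ha
    have := congrArg θ.symm h0
    simpa using this
  have haθa : x.a * θ x.a ≠ 0 := mul_ne_zero ha hθa
  set w : Fq n := (x.a * θ x.a)⁻¹ with hwdef
  have memN : ∀ z : SuzukiA n θ, z ∈ N ↔ z.a = 0 ∧ Stmt14Aux.Tr n (z.b * w) = 0 := by
    intro z
    have hset : z ∈ N ↔ ∃ g : SuzukiA n θ, z = x⁻¹ * g⁻¹ * x * g := by
      have := Set.ext_iff.mp hN z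
      simpa using this
    have trM' : ∀ c : Fq n, (x.a * θ c + c * θ x.a) * w = θ (c * x.a⁻¹) + c * x.a⁻¹ := by
      intro c
      rw [map_mul, map_inv₀, hwdef]
      field_simp
    rw [hset]
    constructor
    · rintro ⟨g, rfl⟩
      rw [Stmt14Aux.comm_eq]
      refine ⟨rfl, ?_⟩
      show Stmt14Aux.Tr n ((x.a * θ g.a + g.a * θ x.a) * w) = 0
      rw [trM' g.a]
      exact (Stmt14Aux.Tr_eq_zero_iff hθ hm _).mpr ⟨g.a * x.a⁻¹, rfl⟩
    · rintro ⟨h0, htr⟩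
      obtain ⟨s, hs⟩ := (Stmt14Aux.Tr_eq_zero_iff hθ hm _).mp htr
      refine ⟨⟨x.a * s, 0⟩, ?_⟩
      rw [Stmt14Aux.comm_eq]
      ext
      · exact h0
      · show z.b = x.a * θ (x.a * s) + x.a * s * θ x.a
        have hzb : (θ s + s) * (x.a * θ x.a) = z.b := by
          rw [hs, hwdef]
          field_simp
        rw [map_mul]
        linear_combination -hzb
  have commute_iff : ∀ g h : SuzukiA n θ,
      ((QuotientGroup.mk g * QuotientGroup.mk h : SuzukiA n θ ⧸ N) =
        QuotientGroup.mk h * QuotientGroup.mk g) ↔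
      Stmt14Aux.Tr n ((g.a * θ h.a + h.a * θ g.a) * w) = 0 := by
    intro g h
    rw [← QuotientGroup.mk_mul, ← QuotientGroup.mk_mul, QuotientGroup.eq,
      Stmt14Aux.comm2_eq, memN]
    simp
  have trM : ∀ c : Fq n, Stmt14Aux.Tr n ((x.a * θ c + c * θ x.a) * w) = 0 := by
    intro c
    have trM' : (x.a * θ c + c * θ x.a) * w = θ (c * x.a⁻¹) + c * x.a⁻¹ := by
      rw [map_mul, map_inv₀, hwdef]
      field_simp
    rw [trM']
    exact (Stmt14Aux.Tr_eq_zero_iff hθ hm _).mpr ⟨c * x.a⁻¹, rfl⟩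
  have hcent : ∀ g : SuzukiA n θ,
      (QuotientGroup.mk x * QuotientGroup.mk g : SuzukiA n θ ⧸ N) =
        QuotientGroup.mk g * QuotientGroup.mk x :=
    fun g => (commute_iff x g).mpr (trM g.a)
  set H : Subgroup (SuzukiA n θ) :=
    { carrier := {g : SuzukiA n θ | Stmt14Aux.Tr n (g.a * x.a⁻¹) = 0}
      mul_mem' := by
        intro g h hg hh
        show Stmt14Aux.Tr n ((g * h).a * x.a⁻¹) = 0
        have hgh : (g * h).a = g.a + h.a := rfl
        rw [hgh, add_mul, Stmt14Aux.Tr_add]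
        rw [Set.mem_setOf_eq] at hg hh
        rw [hg, hh, add_zero]
      one_mem' := by
        show Stmt14Aux.Tr n ((1 : SuzukiA n θ).a * x.a⁻¹) = 0
        rw [SuzukiA.one_a, zero_mul, Stmt14Aux.Tr_zero]
      inv_mem' := by
        intro g hg
        exact hg } with hHdef
  set Qs : Subgroup (SuzukiA n θ ⧸ N) := Subgroup.map (QuotientGroup.mk' N) H with hQdef
  have memQ : ∀ g : SuzukiA n θ,
      (QuotientGroup.mk g : SuzukiA n θ ⧸ N) ∈ Qs ↔
      Stmt14Aux.Tr n (g.a * x.a⁻¹) = 0 := by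
    intro g
    constructor
    · intro hmem
      obtain ⟨h, hh, hhg⟩ := Subgroup.mem_map.mp hmem
      rw [QuotientGroup.mk'_apply] at hhg
      have hmem2 : h⁻¹ * g ∈ N := QuotientGroup.eq.mp hhg
      have h0 : (h⁻¹ * g).a = 0 := ((memN _).mp hmem2).1
      have hia : (h⁻¹ * g).a = h.a + g.a := rfl
      rw [hia] at h0
      have hga : g.a = h.a := by linear_combination h0 - Stmt14Aux.char2 h.a
      rw [hga]
      exact hh
    · intro htr
      exact Subgroup.mem_map.mpr ⟨g, htr, rfl⟩
  have hNleH : N ≤ H := by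
    intro z hz
    show Stmt14Aux.Tr n (z.a * x.a⁻¹) = 0
    rw [((memN z).mp hz).1, zero_mul, Stmt14Aux.Tr_zero]
  have hxxa : (x * x).a = 0 := by rw [hxx]
  have hxxb : (x * x).b = x.a * θ x.a := by rw [hxx]
  have hTr1 : Stmt14Aux.Tr n ((x * x).b * w) = 1 := by
    rw [hxxb, hwdef, mul_inv_cancel₀ haθa]
    exact Stmt14Aux.Tr_one hm
  have hxxN : x * x ∉ N := by
    rw [memN]
    rintro ⟨-, htr⟩
    rw [hTr1] at htr
    exact one_ne_zero htr
  have hmk2 : (QuotientGroup.mk x : SuzukiA n θ ⧸ N) ^ 2 = QuotientGroup.mk (x * x) := by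
    rw [pow_two, QuotientGroup.mk_mul]
  have hmkxxne : (QuotientGroup.mk (x * x) : SuzukiA n θ ⧸ N) ≠ 1 := by
    intro h
    exact hxxN ((QuotientGroup.eq_one_iff _).mp h)
  have hmk4 : (QuotientGroup.mk x : SuzukiA n θ ⧸ N) ^ 4 = 1 := by
    rw [← QuotientGroup.mk_pow, hx4]
    rfl
  have hord : orderOf (QuotientGroup.mk x : SuzukiA n θ ⧸ N) = 4 := by
    have hdvd := orderOf_dvd_of_pow_eq_one hmk4
    have hne2 : (QuotientGroup.mk x : SuzukiA n θ ⧸ N) ^ 2 ≠ 1 := by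
      rw [hmk2]; exact hmkxxne
    have hdvd' : orderOf (QuotientGroup.mk x : SuzukiA n θ ⧸ N) ∣ 2 ^ 2 := by
      simpa using hdvd
    obtain ⟨i, hi, hdi⟩ := (Nat.dvd_prime_pow Nat.prime_two).mp hdvd'
    interval_cases i
    · rw [pow_zero] at hdi
      exfalso
      apply hne2
      rw [orderOf_eq_one_iff.mp hdi, one_pow]
    · rw [pow_one] at hdi
      exfalso
      apply hne2
      rw [← hdi]
      exact pow_orderOf_eq_one _
    · rw [hdi]
      norm_num
  have hrep : ∀ q : Qs, ∃ g : SuzukiA n θ,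
      Stmt14Aux.Tr n (g.a * x.a⁻¹) = 0 ∧ (QuotientGroup.mk g : SuzukiA n θ ⧸ N) = ↑q := by
    rintro ⟨q, hq⟩
    obtain ⟨g, hg, hgq⟩ := Subgroup.mem_map.mp hq
    rw [QuotientGroup.mk'_apply] at hgq
    exact ⟨g, hg, hgq⟩
  have hmkxxQ : (QuotientGroup.mk (x * x) : SuzukiA n θ ⧸ N) ∈ Qs := by
    rw [memQ]
    rw [hxxa, zero_mul, Stmt14Aux.Tr_zero]
  set ξ : Qs := ⟨QuotientGroup.mk (x * x), hmkxxQ⟩ with hξdef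
  have hcoe_mul : ∀ q r : Qs, ((q * r : Qs) : SuzukiA n θ ⧸ N) = ↑q * ↑r := fun _ _ => rfl
  have mem_center_of_rep : ∀ (q : Qs) (g : SuzukiA n θ), g.a = 0 →
      (QuotientGroup.mk g : SuzukiA n θ ⧸ N) = ↑q → q ∈ Subgroup.center Qs := by
    intro q g hga hgq
    rw [Subgroup.mem_center_iff]
    intro r
    obtain ⟨h, -, hr⟩ := hrep r
    apply Subtype.ext
    rw [hcoe_mul, hcoe_mul, ← hr, ← hgq]
    apply (commute_iff h g).mpr
    rw [hga]
    simp [Stmt14Aux.Tr_zero]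
  have hcenter : ∀ q : Qs, q ∈ Subgroup.center Qs ↔ q = 1 ∨ q = ξ := by
    intro q
    constructor
    · intro hq
      obtain ⟨g, hgH, hgq⟩ := hrep q
      by_cases hga : g.a = 0
      · rcases Stmt14Aux.Tr_cases hn0 (g.b * w) with h0 | h1
        · left
          apply Subtype.ext
          show (q : SuzukiA n θ ⧸ N) = 1
          rw [← hgq, QuotientGroup.eq_one_iff]
          exact (memN g).mpr ⟨hga, h0⟩
        · right
          apply Subtype.ext
          show (q : SuzukiA n θ ⧸ N) = QuotientGroup.mk (x * x)
          rw [← hgq, QuotientGroup.eq, Stmt14Aux.inv_mul_a0 hga]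
          apply (memN _).mpr
          constructor
          · show g.a + (x * x).a = 0
            rw [hga, hxxa, add_zero]
          · show Stmt14Aux.Tr n ((g.b + (x * x).b) * w) = 0
            rw [add_mul, Stmt14Aux.Tr_add, h1, hTr1]
            exact Stmt14Aux.char2 1
      · exfalso
        set u : Fq n := g.a * x.a⁻¹ with hudef
        have hu0 : u ≠ 0 := mul_ne_zero hga (inv_ne_zero ha)
        obtain ⟨v, hv, hv1⟩ := Stmt14Aux.nondeg hm hθ hu0 hgH
        set e : SuzukiA n θ := ⟨x.a * v, 0⟩ with hedef
        have heQ : (QuotientGroup.mk e : SuzukiA n θ ⧸ N) ∈ Qs := by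
          rw [memQ]
          show Stmt14Aux.Tr n (x.a * v * x.a⁻¹) = 0
          rw [show x.a * v * x.a⁻¹ = v by field_simp]
          exact hv
        have hcomm := Subgroup.mem_center_iff.mp hq ⟨QuotientGroup.mk e, heQ⟩
        have hcoe := congrArg (Subtype.val) hcomm
        rw [hcoe_mul, hcoe_mul, ← hgq] at hcoe
        have h0 := (commute_iff e g).mp hcoe
        have hrw : (e.a * θ g.a + g.a * θ e.a) * w = u * θ v + v * θ u := by
          show (x.a * v * θ g.a + g.a * θ (x.a * v)) * w =
            g.a * x.a⁻¹ * θ v + v * θ (g.a * x.a⁻¹)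
          rw [map_mul, map_mul, map_inv₀, hwdef]
          field_simp
          ring
        rw [hrw] at h0
        rw [h0] at hv1
        exact zero_ne_one hv1
    · rintro (rfl | rfl)
      · exact Subgroup.one_mem _
      · exact mem_center_of_rep ξ (x * x) hxxa rfl
  have hξne : ξ ≠ 1 := by
    intro h
    exact hmkxxne (congrArg Subtype.val h)
  have hcardcenter : Nat.card (Subgroup.center Qs) = 2 := by
    have hset : (Subgroup.center Qs : Set Qs) = {1, ξ} := by
      ext q
      simp only [SetLike.mem_coe, Set.mem_insert_iff, Set.mem_singleton_iff]
      exact hcenter q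
    rw [← SetLike.coe_sort_coe, hset, Nat.card_coe_set_eq,
      Set.ncard_pair (Ne.symm hξne)]
  have hcoe_comm : ∀ (q r : Qs) (g h : SuzukiA n θ),
      (QuotientGroup.mk g : SuzukiA n θ ⧸ N) = ↑q →
      (QuotientGroup.mk h : SuzukiA n θ ⧸ N) = ↑r →
      ((⁅q, r⁆ : Qs) : SuzukiA n θ ⧸ N) = QuotientGroup.mk (g * h * g⁻¹ * h⁻¹) := by
    intro q r g h hg hh
    have h1 : ((⁅q, r⁆ : Qs) : SuzukiA n θ ⧸ N) = ↑q * ↑r * (↑q)⁻¹ * (↑r)⁻¹ := rfl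
    rw [h1, ← hg, ← hh]
    simp [QuotientGroup.mk_mul, QuotientGroup.mk_inv]
  have hcommutator : commutator Qs = Subgroup.center Qs := by
    apply le_antisymm
    · rw [commutator_def, Subgroup.commutator_le]
      intro q _ r _
      obtain ⟨g, -, hgq⟩ := hrep q
      obtain ⟨h, -, hhq⟩ := hrep r
      apply mem_center_of_rep ⁅q, r⁆ (g * h * g⁻¹ * h⁻¹)
      · rw [Stmt14Aux.commElt_eq]
      · exact (hcoe_comm q r g h hgq hhq).symm
    · intro q hq
      rcases (hcenter q).mp hq with rfl | rfl
      · exact Subgroup.one_mem _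
      · obtain ⟨t, ht⟩ := Stmt14Aux.exists_not_fixed hn hθ
        set u : Fq n := θ t + t with hudef
        have hu0 : u ≠ 0 := by
          intro h0
          apply ht
          linear_combination h0 - Stmt14Aux.char2 t
        have hut : Stmt14Aux.Tr n u = 0 :=
          (Stmt14Aux.Tr_eq_zero_iff hθ hm u).mpr ⟨t, rfl⟩
        obtain ⟨v, hv, hv1⟩ := Stmt14Aux.nondeg hm hθ hu0 hut
        have hgQ : (QuotientGroup.mk (⟨x.a * u, 0⟩ : SuzukiA n θ) : SuzukiA n θ ⧸ N) ∈ Qs := by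
          rw [memQ]
          show Stmt14Aux.Tr n (x.a * u * x.a⁻¹) = 0
          rw [show x.a * u * x.a⁻¹ = u by field_simp]
          exact hut
        have hhQ : (QuotientGroup.mk (⟨x.a * v, 0⟩ : SuzukiA n θ) : SuzukiA n θ ⧸ N) ∈ Qs := by
          rw [memQ]
          show Stmt14Aux.Tr n (x.a * v * x.a⁻¹) = 0
          rw [show x.a * v * x.a⁻¹ = v by field_simp]
          exact hv
        have hxieq : ⁅(⟨_, hgQ⟩ : Qs), (⟨_, hhQ⟩ : Qs)⁆ = ξ := by
          apply Subtype.ext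
          rw [hcoe_comm ⟨_, hgQ⟩ ⟨_, hhQ⟩ _ _ rfl rfl]
          show (QuotientGroup.mk _ : SuzukiA n θ ⧸ N) = QuotientGroup.mk (x * x)
          rw [Stmt14Aux.commElt_eq, QuotientGroup.eq, Stmt14Aux.inv_mul_a0 rfl]
          apply (memN _).mpr
          constructor
          · show (0 : Fq n) + (x * x).a = 0
            rw [hxxa, add_zero]
          · show Stmt14Aux.Tr n ((x.a * u * θ (x.a * v) + x.a * v * θ (x.a * u) + (x * x).b) * w) = 0
            have hrw2 : (x.a * u * θ (x.a * v) + x.a * v * θ (x.a * u)) * w =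
                u * θ v + v * θ u := by
              rw [map_mul, map_mul, hwdef]
              field_simp
            rw [hxxb, add_mul, Stmt14Aux.Tr_add, hrw2, hv1, hwdef, mul_inv_cancel₀ haθa,
              Stmt14Aux.Tr_one hm]
            exact Stmt14Aux.char2 1
        rw [commutator_def, ← hxieq]
        exact Subgroup.commutator_mem_commutator (Subgroup.mem_top _) (Subgroup.mem_top _)
  have hsqcen : ∀ q : Qs, q ^ 2 ∈ Subgroup.center Qs := by
    intro q
    obtain ⟨g, -, hgq⟩ := hrep q
    apply mem_center_of_rep (q ^ 2) (g * g)
    · rw [Stmt14Aux.sq_eq]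
    · show (QuotientGroup.mk (g * g) : SuzukiA n θ ⧸ N) = (↑q) ^ 2
      rw [← hgq, QuotientGroup.mk_mul, pow_two]
  have hcardH : Nat.card H = 2 ^ (n - 1) * 2 ^ n := by
    have e : H ≃ ((Stmt14Aux.TrHom n).ker × Fq n) :=
      { toFun := fun g => (⟨g.1.a * x.a⁻¹, by
          show Stmt14Aux.Tr n (g.1.a * x.a⁻¹) = 0
          exact g.2⟩, g.1.b)
        invFun := fun p => ⟨⟨p.1.1 * x.a, p.2⟩, by
          show Stmt14Aux.Tr n (p.1.1 * x.a * x.a⁻¹) = 0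
          rw [mul_assoc, mul_inv_cancel₀ ha, mul_one]
          exact p.1.2⟩
        left_inv := fun g => by
          apply Subtype.ext
          ext
          · show g.1.a * x.a⁻¹ * x.a = g.1.a
            field_simp
          · rfl
        right_inv := fun p => by
          have h1 : p.1.1 * x.a * x.a⁻¹ = p.1.1 := by
            rw [mul_assoc, mul_inv_cancel₀ ha, mul_one]
          ext
          · exact h1
          · rfl }
    rw [Nat.card_congr e, Nat.card_prod, Stmt14Aux.card_kerTr hm, Stmt14Aux.card_Fq hn0]
  have hcardN : Nat.card N = 2 ^ (n - 1) := by
    have e : N ≃ (Stmt14Aux.TrHom n).ker :=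
      { toFun := fun z => ⟨z.1.b * w, by
          show Stmt14Aux.Tr n (z.1.b * w) = 0
          exact ((memN z.1).mp z.2).2⟩
        invFun := fun c => ⟨⟨0, c.1 * (x.a * θ x.a)⟩, (memN _).mpr ⟨rfl, by
          show Stmt14Aux.Tr n (c.1 * (x.a * θ x.a) * w) = 0
          rw [hwdef, mul_assoc, mul_inv_cancel₀ haθa, mul_one]
          exact c.2⟩⟩
        left_inv := fun z => by
          apply Subtype.ext
          ext
          · exact (((memN z.1).mp z.2).1).symm
          · show z.1.b * w * (x.a * θ x.a) = z.1.b
            rw [hwdef]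
            field_simp
        right_inv := fun c => by
          apply Subtype.ext
          show c.1 * (x.a * θ x.a) * w = c.1
          rw [hwdef, mul_assoc, mul_inv_cancel₀ haθa, mul_one] }
    rw [Nat.card_congr e, Stmt14Aux.card_kerTr hm]
  have hcardQ : Nat.card Qs = 2 ^ n := by
    set f := (QuotientGroup.mk' N).comp H.subtype with hfdef
    have hrange : f.range = Qs := by
      rw [hfdef, MonoidHom.range_comp, Subgroup.range_subtype]
    have hker : f.ker = N.subgroupOf H := by
      rw [hfdef, ← MonoidHom.comap_ker, QuotientGroup.ker_mk']
      rfl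
    have lag : Nat.card H = Nat.card (H ⧸ f.ker) * Nat.card f.ker :=
      Subgroup.card_eq_card_quotient_mul_card_subgroup f.ker
    have e2 : Nat.card (H ⧸ f.ker) = Nat.card Qs := by
      rw [Nat.card_congr (QuotientGroup.quotientKerEquivRange f).toEquiv, hrange]
    have e3 : Nat.card f.ker = 2 ^ (n - 1) := by
      rw [hker, Nat.card_congr (Subgroup.subgroupOfEquivOfLe hNleH).toEquiv, hcardN]
    rw [hcardH, e2, e3] at lag
    have hpos : 0 < 2 ^ (n - 1) := Nat.two_pow_pos (n - 1)
    have lag' : (2 : ℕ) ^ n * 2 ^ (n - 1) = Nat.card Qs * 2 ^ (n - 1) := by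
      rw [mul_comm ((2:ℕ) ^ n) _]
      exact lag
    exact (Nat.eq_of_mul_eq_mul_right hpos lag').symm
  have hsup : Subgroup.zpowers (QuotientGroup.mk x : SuzukiA n θ ⧸ N) ⊔ Qs = ⊤ := by
    rw [eq_top_iff]
    rintro y -
    obtain ⟨g, rfl⟩ := QuotientGroup.mk_surjective y
    rcases Stmt14Aux.Tr_cases hn0 (g.a * x.a⁻¹) with h0 | h1
    · exact Subgroup.mem_sup_right ((memQ g).mpr h0)
    · have hg' : (QuotientGroup.mk (x⁻¹ * g) : SuzukiA n θ ⧸ N) ∈ Qs := by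
        rw [memQ]
        show Stmt14Aux.Tr n ((x.a + g.a) * x.a⁻¹) = 0
        rw [add_mul, Stmt14Aux.Tr_add, mul_inv_cancel₀ ha, Stmt14Aux.Tr_one hm, h1]
        exact Stmt14Aux.char2 1
      have heq : (QuotientGroup.mk g : SuzukiA n θ ⧸ N) =
          QuotientGroup.mk x * QuotientGroup.mk (x⁻¹ * g) := by
        rw [← QuotientGroup.mk_mul]
        congr 1
        group
      rw [heq]
      exact Subgroup.mul_mem _ (Subgroup.mem_sup_left (Subgroup.mem_zpowers _))
        (Subgroup.mem_sup_right hg')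
  have hcommall : ∀ p ∈ Subgroup.zpowers (QuotientGroup.mk x : SuzukiA n θ ⧸ N),
      ∀ q ∈ Qs, Commute p q := by
    intro p hp q hq
    obtain ⟨k, rfl⟩ := Subgroup.mem_zpowers_iff.mp hp
    have hbase : ∀ y : SuzukiA n θ ⧸ N, Commute (QuotientGroup.mk x) y := by
      intro y
      obtain ⟨g, rfl⟩ := QuotientGroup.mk_surjective y
      exact hcent g
    exact (hbase q).zpow_left k
  have hx2Q : (QuotientGroup.mk x : SuzukiA n θ ⧸ N) ^ 2 ∈ Qs := by
    rw [hmk2]; exact hmkxxQ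
  have hxnotQ : (QuotientGroup.mk x : SuzukiA n θ ⧸ N) ∉ Qs := by
    intro hmem
    have h1 := (memQ x).mp hmem
    rw [mul_inv_cancel₀ ha, Stmt14Aux.Tr_one hm] at h1
    exact one_ne_zero h1
  have hinf : Subgroup.zpowers (QuotientGroup.mk x : SuzukiA n θ ⧸ N) ⊓ Qs =
      Subgroup.zpowers ((QuotientGroup.mk x : SuzukiA n θ ⧸ N) ^ 2) := by
    apply le_antisymm
    · rintro y hy
      rw [Subgroup.mem_inf] at hy
      obtain ⟨k, rfl⟩ := Subgroup.mem_zpowers_iff.mp hy.1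
      rcases Int.even_or_odd k with ⟨j, hj⟩ | ⟨j, hj⟩
      · apply Subgroup.mem_zpowers_iff.mpr
        refine ⟨j, ?_⟩
        rw [hj]
        group
      · exfalso
        apply hxnotQ
        have hpowQ : ((QuotientGroup.mk x : SuzukiA n θ ⧸ N) ^ 2) ^ j ∈ Qs :=
          Subgroup.zpow_mem _ hx2Q j
        have heq2 : (QuotientGroup.mk x : SuzukiA n θ ⧸ N) =
            (((QuotientGroup.mk x : SuzukiA n θ ⧸ N) ^ 2) ^ j)⁻¹ *
              (QuotientGroup.mk x : SuzukiA n θ ⧸ N) ^ k := by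
          rw [hj]
          group
        rw [heq2]
        exact Subgroup.mul_mem _ (Subgroup.inv_mem _ hpowQ) hy.2
    · rw [Subgroup.zpowers_le, Subgroup.mem_inf]
      exact ⟨Subgroup.pow_mem _ (Subgroup.mem_zpowers _) 2, hx2Q⟩
  have hsubOf : (Subgroup.zpowers (QuotientGroup.mk x : SuzukiA n θ ⧸ N) ⊓ Qs).subgroupOf Qs =
      Subgroup.center Qs := by
    ext q
    rw [Subgroup.mem_subgroupOf, hinf, hcenter q]
    have h2ord : (((QuotientGroup.mk x : SuzukiA n θ ⧸ N) ^ 2) ^ 2) = 1 := by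
      rw [← pow_mul]
      exact hmk4
    constructor
    · intro hmem
      obtain ⟨k, hk⟩ := Subgroup.mem_zpowers_iff.mp hmem
      rcases Int.even_or_odd k with ⟨j, hj⟩ | ⟨j, hj⟩
      · left
        apply Subtype.ext
        rw [← hk, hj]
        have hsplit : ((QuotientGroup.mk x : SuzukiA n θ ⧸ N) ^ 2) ^ (j + j) =
            ((((QuotientGroup.mk x : SuzukiA n θ ⧸ N) ^ 2) ^ 2) ^ j : SuzukiA n θ ⧸ N) := by
          group
        rw [hsplit, h2ord, one_zpow]
        rfl
      · right
        apply Subtype.ext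
        rw [← hk, hj]
        have hsplit : ((QuotientGroup.mk x : SuzukiA n θ ⧸ N) ^ 2) ^ (2 * j + 1) =
            ((((QuotientGroup.mk x : SuzukiA n θ ⧸ N) ^ 2) ^ 2) ^ j : SuzukiA n θ ⧸ N) *
              (QuotientGroup.mk x : SuzukiA n θ ⧸ N) ^ 2 := by
          group
        rw [hsplit, h2ord, one_zpow, one_mul, hmk2]
    · rintro (rfl | rfl)
      · have : ((1 : Qs) : SuzukiA n θ ⧸ N) = 1 := rfl
        rw [this]
        exact Subgroup.one_mem _
      · have : ((ξ : Qs) : SuzukiA n θ ⧸ N) = QuotientGroup.mk (x * x) := rfl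
        rw [this, ← hmk2]
        exact Subgroup.mem_zpowers _
  exact ⟨Subgroup.zpowers (QuotientGroup.mk x), Qs, rfl,
    by rw [Nat.card_zpowers, hord],
    ⟨hcardcenter, hcommutator, hsqcen⟩, hcardQ, hsup, hcommall, hinf, hsubOf⟩
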